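/- arXiv:1801.08155 — 3 statements merged into one kernel-verified Lean document; each statement's English description precedes it below -/
import Mathlib

section
/- Let E be a nontrivial real normed vector space, let a ∈ E and d > 0. Define D_S², D_B² : E → ℝ by D_S²(z) = (‖z − a‖ − d)² and D_B²(z) = (max(‖z − a‖ − d, 0))². Then: (i) D_B² is convex; (ii) D_B²(z) ≤ D_S²(z) for all z; and (iii) for every convex function g : E → ℝ with g(z) ≤ D_S²(z) for all z, one has g(z) ≤ D_B²(z) for all z. In other words, D_B² is the convex envelope (the largest convex underestimator) of the squared distance to the sphere D_S². -/
/-- The squared distance to the closed ball, `D_B²(z) = (max (‖z-a‖-d) 0)²`, is the convex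
envelope (the largest convex underestimator) of the squared distance to the sphere,
`D_S²(z) = (‖z-a‖-d)²`: it is convex, it underestimates `D_S²` pointwise, and any convex
function `g` underestimating `D_S²` also underestimates `D_B²`. -/
theorem ball_sq_dist_is_convex_envelope {E : Type*} [NormedAddCommGroup E]
    [NormedSpace ℝ E] [Nontrivial E] (a : E) (d : ℝ) (hd : 0 < d) :
    ConvexOn ℝ Set.univ (fun z : E => (max (‖z - a‖ - d) 0) ^ 2) ∧
      (∀ z : E, (max (‖z - a‖ - d) 0) ^ 2 ≤ (‖z - a‖ - d) ^ 2) ∧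
      ∀ g : E → ℝ, ConvexOn ℝ Set.univ g → (∀ z : E, g z ≤ (‖z - a‖ - d) ^ 2) →
        ∀ z : E, g z ≤ (max (‖z - a‖ - d) 0) ^ 2 := by
  -- the scalar function φ t = (max (t - d) 0)^2
  set φ : ℝ → ℝ := fun t => (max (t - d) 0) ^ 2 with hφdef
  have hφmono : Monotone φ := by
    intro s t hst
    exact pow_le_pow_left₀ (le_max_right _ _) (max_le_max (by linarith) le_rfl) 2
  have hmax : ConvexOn ℝ (Set.univ : Set ℝ) (fun t => max (t - d) 0) :=
    ((convexOn_id convex_univ).sub (concaveOn_const d convex_univ)).sup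
      (convexOn_const 0 convex_univ)
  have hφ : ConvexOn ℝ (Set.univ : Set ℝ) φ := by
    refine ⟨convex_univ, ?_⟩
    intro x _ y _ p q hp hq hpq
    have h1 : max ((p • x + q • y) - d) 0 ≤ p * max (x - d) 0 + q * max (y - d) 0 :=
      hmax.2 (Set.mem_univ x) (Set.mem_univ y) hp hq hpq
    have h2 : φ (p • x + q • y) ≤ (p * max (x - d) 0 + q * max (y - d) 0) ^ 2 :=
      pow_le_pow_left₀ (le_max_right _ _) h1 2
    have hsq : ConvexOn ℝ (Set.Ici (0:ℝ)) (fun t : ℝ => t ^ 2) :=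
      (Even.convexOn_pow (by norm_num)).subset (Set.subset_univ _) (convex_Ici 0)
    have h3 := hsq.2 (Set.mem_Ici.2 (le_max_right (x - d) 0))
      (Set.mem_Ici.2 (le_max_right (y - d) 0)) hp hq hpq
    simp only [smul_eq_mul] at h3 h2 ⊢
    exact h2.trans h3
  constructor
  · refine ⟨convex_univ, ?_⟩
    intro x _ y _ p q hp hq hpq
    have hn : ‖(p • x + q • y) - a‖ ≤ p * ‖x - a‖ + q * ‖y - a‖ := by
      have : (p • x + q • y) - a = p • (x - a) + q • (y - a) := by
        have ha : (p + q) • a = a := by rw [hpq, one_smul]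
        rw [smul_sub, smul_sub]
        nth_rewrite 1 [← ha]
        rw [add_smul]; abel
      rw [this]
      calc ‖p • (x - a) + q • (y - a)‖ ≤ ‖p • (x - a)‖ + ‖q • (y - a)‖ := norm_add_le _ _
        _ = p * ‖x - a‖ + q * ‖y - a‖ := by
            rw [norm_smul, norm_smul, Real.norm_of_nonneg hp, Real.norm_of_nonneg hq]
    calc φ ‖(p • x + q • y) - a‖ ≤ φ (p * ‖x - a‖ + q * ‖y - a‖) := hφmono hn
      _ ≤ p * φ ‖x - a‖ + q * φ ‖y - a‖ := by
          simpa using hφ.2 (Set.mem_univ ‖x - a‖) (Set.mem_univ ‖y - a‖) hp hq hpq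
  constructor
  · intro z
    rcases le_or_gt 0 (‖z - a‖ - d) with h | h
    · rw [max_eq_left h]
    · rw [max_eq_right h.le]
      simpa using sq_nonneg (‖z - a‖ - d)
  · intro g hg hle z
    rcases le_or_gt d ‖z - a‖ with h | h
    · rw [max_eq_left (by linarith)]
      exact hle z
    · -- inside the ball: g z ≤ 0 = (max ...)^2
      rw [max_eq_right (by linarith)]
      set c := ‖z - a‖ with hc
      have hc0 : 0 ≤ c := norm_nonneg _
      -- choose u with ‖u‖ = d and z - a = (c/d) • u
      obtain ⟨u, hu, hzu⟩ : ∃ u : E, ‖u‖ = d ∧ z - a = (c / d) • u := by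
        by_cases hz : z = a
        · obtain ⟨u, hu⟩ := exists_norm_eq E hd.le
          exact ⟨u, hu, by simp [hz, hc, sub_self]⟩
        · refine ⟨(d / c) • (z - a), ?_, ?_⟩
          · have hcpos : 0 < c := by
              rw [hc, norm_pos_iff]; exact sub_ne_zero_of_ne hz
            rw [norm_smul, Real.norm_of_nonneg (by positivity), ← hc]
            field_simp
          · rw [smul_smul]
            have hcpos : 0 < c := by
              rw [hc, norm_pos_iff]; exact sub_ne_zero_of_ne hz
            rw [div_mul_div_comm, mul_comm, div_self (by positivity), one_smul]
      set p := a + u with hp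
      set q := a - u with hq
      have hgp : g p ≤ 0 := by
        have := hle p
        simpa [hp, hu] using this
      have hgq : g q ≤ 0 := by
        have := hle q
        have hnq : ‖q - a‖ = d := by simp [hq, norm_neg, hu]
        rw [hnq] at this
        simpa using this
      set lam := (c + d) / (2 * d) with hlam
      have hlam0 : 0 ≤ lam := by positivity
      have hlam1 : lam ≤ 1 := by
        rw [hlam, div_le_one (by positivity)]; linarith
      have hcomb : lam • p + (1 - lam) • q = z := by
        have h2lam : 2 * lam - 1 = c / d := by
          rw [hlam]; field_simp; ring
        have : lam • p + (1 - lam) • q = a + (2 * lam - 1) • u := by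
          rw [hp, hq, smul_add, smul_sub, sub_smul, sub_smul]
          module
        rw [this, h2lam, ← hzu]
        abel
      have := hg.2 (Set.mem_univ p) (Set.mem_univ q) hlam0 (by linarith : 0 ≤ 1 - lam)
        (by ring)
      rw [hcomb] at this
      have : g z ≤ lam * g p + (1 - lam) * g q := by simpa using this
      have h1 : lam * g p ≤ 0 := mul_nonpos_of_nonneg_of_nonpos hlam0 hgp
      have h2 : (1 - lam) * g q ≤ 0 := mul_nonpos_of_nonneg_of_nonpos (by linarith) hgq
      calc g z ≤ lam * g p + (1 - lam) * g q := this
        _ ≤ 0 := by linarith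
        _ = 0 ^ 2 := by norm_num
end

section
/- Let E and F be real Hilbert spaces, let A : E → F be a continuous linear map with adjoint A*, and let L ⊆ F be a nonempty closed convex set with metric projection P_L. Define ψ : E → ℝ by ψ(x) = (1/2)·(infDist(A x, L))². Then ψ is Fréchet differentiable at every x ∈ E with gradient ∇ψ(x) = A*(A x − P_L(A x)), and ∇ψ is Lipschitz continuous with Lipschitz constant ‖A‖² (the square of the operator norm of A). -/
open Metric InnerProductSpace

local notation "⟪" x ", " y "⟫" => @inner ℝ _ _ x y

section aux
variable {F : Type*} [NormedAddCommGroup F] [InnerProductSpace ℝ F] [CompleteSpace F]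
  {L : Set F} {P : F → F}

lemma proj_vi (hconv : Convex ℝ L)
    (hP : ∀ z : F, P z ∈ L ∧ dist z (P z) = Metric.infDist z L) (z : F) :
    ∀ w ∈ L, ⟪z - P z, w - P z⟫ ≤ 0 := by
  have h1 : ‖z - P z‖ = ⨅ w : L, ‖z - w‖ := by
    have h := (hP z).2
    rw [Metric.infDist_eq_iInf] at h
    simpa [dist_eq_norm] using h
  exact (norm_eq_iInf_iff_real_inner_le_zero hconv (hP z).1).mp h1

lemma sub_proj_lipschitz (hconv : Convex ℝ L)
    (hP : ∀ z : F, P z ∈ L ∧ dist z (P z) = Metric.infDist z L) (y z : F) :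
    ‖(y - P y) - (z - P z)‖ ≤ ‖y - z‖ := by
  have h1 := proj_vi hconv hP y (P z) (hP z).1
  have h2 := proj_vi hconv hP z (P y) (hP y).1
  set u := (y - P y) - (z - P z) with hu
  have e1 : ⟪u, P y - P z⟫ = -⟪y - P y, P z - P y⟫ - ⟪z - P z, P y - P z⟫ := by
    have : P y - P z = -(P z - P y) := by abel
    rw [hu, inner_sub_left, this, inner_neg_right, inner_neg_right]
  have hnn : (0:ℝ) ≤ ⟪u, P y - P z⟫ := by rw [e1]; linarith
  have key : ⟪u, u⟫ ≤ ⟪u, y - z⟫ := by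
    have e2 : u = (y - z) - (P y - P z) := by rw [hu]; abel
    calc ⟪u, u⟫ = ⟪u, y - z⟫ - ⟪u, P y - P z⟫ := by
          nth_rw 2 [e2]; rw [inner_sub_right]
      _ ≤ ⟪u, y - z⟫ := by linarith
  have h3 : ‖u‖ ^ 2 ≤ ‖u‖ * ‖y - z‖ := by
    calc ‖u‖ ^ 2 = ⟪u, u⟫ := (real_inner_self_eq_norm_sq u).symm
      _ ≤ ⟪u, y - z⟫ := key
      _ ≤ ‖u‖ * ‖y - z‖ := real_inner_le_norm u (y - z)
  nlinarith [norm_nonneg u, norm_nonneg (y - z)]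

lemma infDist_eq_norm_sub_proj
    (hP : ∀ z : F, P z ∈ L ∧ dist z (P z) = Metric.infDist z L) (z : F) :
    Metric.infDist z L = ‖z - P z‖ := by
  rw [← (hP z).2, dist_eq_norm]

lemma remainder_bound (hconv : Convex ℝ L)
    (hP : ∀ z : F, P z ∈ L ∧ dist z (P z) = Metric.infDist z L) (y z : F) :
    |(1/2) * (Metric.infDist y L) ^ 2 - (1/2) * (Metric.infDist z L) ^ 2
      - ⟪z - P z, y - z⟫| ≤ (3/2) * ‖y - z‖ ^ 2 := by
  have hdy := infDist_eq_norm_sub_proj hP y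
  have hdz := infDist_eq_norm_sub_proj hP z
  -- upper bound
  have hub : (1/2) * (Metric.infDist y L) ^ 2 ≤
      (1/2) * (Metric.infDist z L) ^ 2 + ⟪z - P z, y - z⟫ + (1/2) * ‖y - z‖ ^ 2 := by
    have h1 : Metric.infDist y L ≤ ‖y - P z‖ := by
      rw [← dist_eq_norm]; exact Metric.infDist_le_dist_of_mem (hP z).1
    have h2 : (Metric.infDist y L) ^ 2 ≤ ‖y - P z‖ ^ 2 := by
      have := Metric.infDist_nonneg (x := y) (s := L)
      nlinarith
    have h3 : ‖y - P z‖ ^ 2 = ‖z - P z‖ ^ 2 + 2 * ⟪z - P z, y - z⟫ + ‖y - z‖ ^ 2 := by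
      have : y - P z = (z - P z) + (y - z) := by abel
      rw [this, norm_add_sq_real]
    rw [hdz]; nlinarith
  -- lower bound
  have hlb : (1/2) * (Metric.infDist z L) ^ 2 ≤
      (1/2) * (Metric.infDist y L) ^ 2 - ⟪y - P y, y - z⟫ + (1/2) * ‖y - z‖ ^ 2 := by
    have h1 : Metric.infDist z L ≤ ‖z - P y‖ := by
      rw [← dist_eq_norm]; exact Metric.infDist_le_dist_of_mem (hP y).1
    have h2 : (Metric.infDist z L) ^ 2 ≤ ‖z - P y‖ ^ 2 := by
      have := Metric.infDist_nonneg (x := z) (s := L)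
      nlinarith
    have h3 : ‖z - P y‖ ^ 2 = ‖y - P y‖ ^ 2 + 2 * ⟪y - P y, z - y⟫ + ‖z - y‖ ^ 2 := by
      have : z - P y = (y - P y) + (z - y) := by abel
      rw [this, norm_add_sq_real]
    have h4 : ⟪y - P y, z - y⟫ = -⟪y - P y, y - z⟫ := by
      rw [← inner_neg_right]; congr 1; abel
    have h5 : ‖z - y‖ ^ 2 = ‖y - z‖ ^ 2 := by rw [norm_sub_rev]
    rw [hdy]; nlinarith
  have hip : |⟪(y - P y) - (z - P z), y - z⟫| ≤ ‖y - z‖ ^ 2 := by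
    calc |⟪(y - P y) - (z - P z), y - z⟫| ≤ ‖(y - P y) - (z - P z)‖ * ‖y - z‖ :=
          abs_real_inner_le_norm _ _
      _ ≤ ‖y - z‖ * ‖y - z‖ :=
          mul_le_mul_of_nonneg_right (sub_proj_lipschitz hconv hP y z) (norm_nonneg _)
      _ = ‖y - z‖ ^ 2 := (sq ‖y - z‖).symm
  have hsplit : ⟪(y - P y) - (z - P z), y - z⟫ = ⟪y - P y, y - z⟫ - ⟪z - P z, y - z⟫ :=
    inner_sub_left _ _ _
  rw [abs_le]
  constructor
  · rw [hsplit] at hip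
    have := (abs_le.mp hip).1
    linarith
  · have := sq_nonneg ‖y - z‖
    linarith

lemma hasGradientAt_half_sq_infDist (hconv : Convex ℝ L)
    (hP : ∀ z : F, P z ∈ L ∧ dist z (P z) = Metric.infDist z L) (z : F) :
    HasGradientAt (fun w : F => (1/2) * (Metric.infDist w L) ^ 2) (z - P z) z := by
  rw [hasGradientAt_iff_hasFDerivAt, hasFDerivAt_iff_isLittleO_nhds_zero]
  rw [Asymptotics.isLittleO_iff]
  intro c hc
  have hmem : Metric.closedBall (0 : F) (2 * c / 3) ∈ nhds (0 : F) :=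
    Metric.closedBall_mem_nhds 0 (by positivity)
  filter_upwards [hmem] with h hh
  have hb : ‖h‖ ≤ 2 * c / 3 := by simpa using hh
  have hrem := remainder_bound hconv hP (z + h) z
  have hzz : z + h - z = h := by abel
  rw [hzz] at hrem
  have htd : (toDual ℝ F (z - P z)) h = ⟪z - P z, h⟫ := rfl
  rw [Real.norm_eq_abs, htd]
  calc |(1/2) * (Metric.infDist (z + h) L) ^ 2 - (1/2) * (Metric.infDist z L) ^ 2
        - ⟪z - P z, h⟫| ≤ (3/2) * ‖h‖ ^ 2 := hrem
    _ = (3/2) * ‖h‖ * ‖h‖ := by ring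
    _ ≤ (3/2) * (2 * c / 3) * ‖h‖ := by
        apply mul_le_mul_of_nonneg_right _ (norm_nonneg h)
        apply mul_le_mul_of_nonneg_left hb (by norm_num)
    _ = c * ‖h‖ := by ring

end aux

/-- For real Hilbert spaces `E`, `F`, a continuous linear map `A : E → F`, and a nonempty
closed convex set `L ⊆ F` with metric projection `P`, the function
`ψ(x) = (1/2)(infDist (A x) L)²` is Fréchet differentiable with gradient
`∇ψ(x) = A* (A x - P (A x))`, and `∇ψ` is Lipschitz with constant `‖A‖²`. -/
theorem gradient_half_sq_infDist_comp_linear {E F : Type*}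
    [NormedAddCommGroup E] [InnerProductSpace ℝ E] [CompleteSpace E]
    [NormedAddCommGroup F] [InnerProductSpace ℝ F] [CompleteSpace F]
    (A : E →L[ℝ] F) (L : Set F) (hne : L.Nonempty) (hcl : IsClosed L)
    (hconv : Convex ℝ L)
    (P : F → F) (hP : ∀ z : F, P z ∈ L ∧ dist z (P z) = Metric.infDist z L) :
    (∀ x : E,
      HasGradientAt (fun w : E => (1 / 2) * (Metric.infDist (A w) L) ^ 2)
        ((ContinuousLinearMap.adjoint A) (A x - P (A x))) x) ∧
      LipschitzWith (‖A‖₊ ^ 2)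
        (gradient fun w : E => (1 / 2) * (Metric.infDist (A w) L) ^ 2) := by
  have hmain : ∀ x : E,
      HasGradientAt (fun w : E => (1 / 2) * (Metric.infDist (A w) L) ^ 2)
        ((ContinuousLinearMap.adjoint A) (A x - P (A x))) x := by
    intro x
    have h0 := hasGradientAt_half_sq_infDist hconv hP (A x)
    rw [hasGradientAt_iff_hasFDerivAt] at h0 ⊢
    have hcomp := h0.comp x A.hasFDerivAt
    have heq : (toDual ℝ F (A x - P (A x))).comp A
        = toDual ℝ E ((ContinuousLinearMap.adjoint A) (A x - P (A x))) := by
      ext v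
      simp only [ContinuousLinearMap.comp_apply, toDual_apply_apply]
      exact (ContinuousLinearMap.adjoint_inner_left A v (A x - P (A x))).symm
    rw [← heq]
    exact hcomp
  refine ⟨hmain, ?_⟩
  have hg : (gradient fun w : E => (1 / 2) * (Metric.infDist (A w) L) ^ 2)
      = fun x => (ContinuousLinearMap.adjoint A) (A x - P (A x)) := gradient_eq hmain
  rw [hg]
  apply LipschitzWith.of_dist_le_mul
  intro x y
  rw [dist_eq_norm, dist_eq_norm]
  have hnA : ‖ContinuousLinearMap.adjoint A‖ = ‖A‖ :=
    LinearIsometryEquiv.norm_map ContinuousLinearMap.adjoint A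
  have hc : ((‖A‖₊ ^ 2 : NNReal) : ℝ) = ‖A‖ * ‖A‖ := by
    simp [sq]
  rw [hc]
  calc ‖(ContinuousLinearMap.adjoint A) (A x - P (A x))
        - (ContinuousLinearMap.adjoint A) (A y - P (A y))‖
      = ‖(ContinuousLinearMap.adjoint A) ((A x - P (A x)) - (A y - P (A y)))‖ := by
        rw [map_sub (ContinuousLinearMap.adjoint A) (A x - P (A x)) (A y - P (A y))]
    _ ≤ ‖ContinuousLinearMap.adjoint A‖ * ‖(A x - P (A x)) - (A y - P (A y))‖ :=
        ContinuousLinearMap.le_opNorm _ _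
    _ ≤ ‖A‖ * ‖A x - A y‖ := by
        rw [hnA]
        exact mul_le_mul_of_nonneg_left (sub_proj_lipschitz hconv hP (A x) (A y))
          (norm_nonneg A)
    _ = ‖A‖ * ‖A (x - y)‖ := by rw [map_sub]
    _ ≤ ‖A‖ * (‖A‖ * ‖x - y‖) :=
        mul_le_mul_of_nonneg_left (A.le_opNorm _) (norm_nonneg A)
    _ = ‖A‖ * ‖A‖ * ‖x - y‖ := by ring
end

section
/- Let n ≥ 1, m ≥ 1, and let {1, …, m} be partitioned into index sets R and T. Let a_1, …, a_m ∈ ℝⁿ, let d_k > 0 for k ∈ R, and let u_j ∈ ℝⁿ with ‖u_j‖ = 1 for j ∈ T. Define f : ℝⁿ → ℝ by f(x) = Σ_{k∈R} (‖x − a_k‖ − d_k)² + Σ_{j∈T} (infDist(x, {a_j + t·u_j : t ∈ ℝ}))². Then inf_{x∈ℝⁿ} f(x) equals the infimum, over all unit vectors θ_k ∈ ℝⁿ (k ∈ R) and scalars t_j ∈ ℝ (j ∈ T), of Σ_{k=1}^m ‖y_k − ȳ‖², where y_k = a_k + d_k·θ_k for k ∈ R, y_j = a_j + t_j·u_j for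 j ∈ T, and ȳ = (1/m)·Σ_{k=1}^m y_k is the centroid of the y_k. -/
open Finset Metric RealInnerProductSpace

variable {E : Type*} [NormedAddCommGroup E] [InnerProductSpace ℝ E]

lemma line_exact (x a u : E) (hu : ‖u‖ = 1) :
    Metric.infDist x {y : E | ∃ t : ℝ, y = a + t • u}
      = ‖x - (a + ⟪x - a, u⟫ • u)‖ := by
  set t0 := ⟪x - a, u⟫ with ht0
  apply le_antisymm
  · have h := Metric.infDist_le_dist_of_mem (x := x)
      (show a + t0 • u ∈ {y : E | ∃ t : ℝ, y = a + t • u} from ⟨t0, rfl⟩)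
    rwa [dist_eq_norm] at h
  · rw [Metric.infDist_eq_iInf]
    have : Nonempty {y : E | ∃ t : ℝ, y = a + t • u} := ⟨⟨a + (0:ℝ) • u, 0, rfl⟩⟩
    apply le_ciInf
    rintro ⟨z, t, rfl⟩
    rw [dist_eq_norm]
    have key : ∀ s : ℝ, ‖x - (a + s • u)‖ ^ 2
        = ‖x - a‖ ^ 2 - 2 * s * t0 + s ^ 2 := by
      intro s
      rw [show x - (a + s • u) = (x - a) - s • u by abel, norm_sub_sq_real,
        real_inner_smul_right, norm_smul, ht0]
      simp [hu]; ring
    have h2 : ‖x - (a + t0 • u)‖ ^ 2 ≤ ‖x - (a + t • u)‖ ^ 2 := by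
      rw [key, key]; nlinarith [sq_nonneg (t - t0)]
    exact le_of_pow_le_pow_left₀ two_ne_zero (norm_nonneg _) h2

lemma variance {m : ℕ} (hm : 0 < m) (y : Fin m → E) (x : E) :
    ∑ k, ‖y k - (m : ℝ)⁻¹ • ∑ l, y l‖ ^ 2 ≤ ∑ k, ‖x - y k‖ ^ 2 := by
  set c := (m : ℝ)⁻¹ • ∑ l, y l with hc
  have hmc : (m : ℝ) • c = ∑ l, y l := by
    rw [hc, smul_smul, mul_inv_cancel₀ (by positivity), one_smul]
  have key : ∀ k, ‖x - y k‖ ^ 2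
      = ‖x - c‖ ^ 2 + 2 * ⟪x - c, c - y k⟫ + ‖c - y k‖ ^ 2 := by
    intro k
    rw [show x - y k = (x - c) + (c - y k) by abel, norm_add_sq_real]
  have hcross : ∑ k, ⟪x - c, c - y k⟫ = 0 := by
    rw [← inner_sum]
    have : ∑ k : Fin m, (c - y k) = (0 : E) := by
      rw [Finset.sum_sub_distrib, Finset.sum_const, Finset.card_univ,
        Fintype.card_fin, ← hmc, ← Nat.cast_smul_eq_nsmul ℝ, sub_self]
    rw [this, inner_zero_right]
  calc ∑ k, ‖y k - c‖ ^ 2 = ∑ k, ‖c - y k‖ ^ 2 := by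
        simp_rw [norm_sub_rev]
    _ ≤ (m : ℝ) * ‖x - c‖ ^ 2 + 2 * ∑ k, ⟪x - c, c - y k⟫
        + ∑ k, ‖c - y k‖ ^ 2 := by
        rw [hcross]; have hm1 : (1:ℝ) ≤ (m:ℝ) := Nat.one_le_cast.mpr hm
        nlinarith [sq_nonneg ‖x - c‖]
    _ = ∑ k, ‖x - y k‖ ^ 2 := by
        simp_rw [key, Finset.sum_add_distrib, Finset.sum_const, Finset.card_univ,
          Fintype.card_fin, Finset.mul_sum]
        push_cast [nsmul_eq_mul]
        ring

lemma sphere_exact (x a : E) {d : ℝ} (hd : 0 < d) {e : E} (he : ‖e‖ = 1) :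
    ∃ θ : E, ‖θ‖ = 1 ∧ ‖x - (a + d • θ)‖ = |‖x - a‖ - d| := by
  by_cases h : x = a
  · subst h
    refine ⟨e, he, ?_⟩
    simp [norm_smul, he, abs_of_pos hd, abs_sub_comm]
  · have hr : ‖x - a‖ ≠ 0 := by simpa [sub_eq_zero] using h
    refine ⟨‖x - a‖⁻¹ • (x - a), ?_, ?_⟩
    · rw [norm_smul, norm_inv, norm_norm, inv_mul_cancel₀ hr]
    · have h1 : x - (a + d • ‖x - a‖⁻¹ • (x - a))
          = (1 - d * ‖x - a‖⁻¹) • (x - a) := by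
        rw [smul_smul, sub_smul, one_smul]; abel
      rw [h1, norm_smul, Real.norm_eq_abs]
      rw [show ‖x - a‖ = |‖x - a‖| from (abs_of_nonneg (norm_nonneg _)).symm,
        ← abs_mul]
      congr 1
      field_simp
      rw [abs_norm]; ring

lemma sphere_le (x a : E) {d : ℝ} (hd : 0 < d) {θ : E} (hθ : ‖θ‖ = 1) :
    (‖x - a‖ - d) ^ 2 ≤ ‖x - (a + d • θ)‖ ^ 2 := by
  have h : |‖x - a‖ - ‖d • θ‖| ≤ ‖(x - a) - d • θ‖ := abs_norm_sub_norm_le _ _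
  rw [norm_smul, hθ, mul_one, Real.norm_eq_abs, abs_of_pos hd] at h
  rw [show x - (a + d • θ) = (x - a) - d • θ by abel, ← sq_abs (‖x - a‖ - d)]
  exact pow_le_pow_left₀ (abs_nonneg _) h 2

/-- The optimal value of the FLORIS single-source hybrid cost
`f(x) = ∑_{k∈R} (‖x - aₖ‖ - dₖ)² + ∑_{j∈T} infDist(x, line through aⱼ with direction uⱼ)²`
equals the optimal value of its closest-point reformulation: the infimum, over unit vectors
`θₖ` (k ∈ R) and scalars `tⱼ` (j ∈ T), of `∑ₖ ‖yₖ - ȳ‖²`, where `yₖ = aₖ + dₖ • θₖ` for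
`k ∈ R`, `yⱼ = aⱼ + tⱼ • uⱼ` for `j ∈ T`, and `ȳ` is the centroid of the `yₖ`. -/
theorem floris_reformulation (n m : ℕ) (hn : 1 ≤ n) (hm : 1 ≤ m)
    (R T : Finset (Fin m)) (hpart : R ∪ T = Finset.univ) (hdisj : Disjoint R T)
    (a : Fin m → EuclideanSpace ℝ (Fin n))
    (d : Fin m → ℝ) (hd : ∀ k ∈ R, 0 < d k)
    (u : Fin m → EuclideanSpace ℝ (Fin n)) (hu : ∀ j ∈ T, ‖u j‖ = 1) :
    sInf {c : ℝ | ∃ x : EuclideanSpace ℝ (Fin n),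
        c = ∑ k ∈ R, (‖x - a k‖ - d k) ^ 2
          + ∑ j ∈ T,
              (Metric.infDist x {y : EuclideanSpace ℝ (Fin n) | ∃ t : ℝ, y = a j + t • u j}) ^ 2}
      = sInf {c : ℝ | ∃ (θ : Fin m → EuclideanSpace ℝ (Fin n)) (t : Fin m → ℝ),
          (∀ k ∈ R, ‖θ k‖ = 1) ∧
          c = ∑ k,
            ‖(if k ∈ R then a k + d k • θ k else a k + t k • u k)
              - (m : ℝ)⁻¹ •
                  ∑ l, (if l ∈ R then a l + d l • θ l else a l + t l • u l)‖ ^ 2} := by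
  classical
  -- a unit vector
  set e : (EuclideanSpace ℝ (Fin n)) := EuclideanSpace.single (⟨0, hn⟩ : Fin n) (1 : ℝ) with he_def
  have he : ‖e‖ = 1 := by rw [he_def, EuclideanSpace.norm_single]; simp
  set A := {c : ℝ | ∃ x : (EuclideanSpace ℝ (Fin n)),
        c = ∑ k ∈ R, (‖x - a k‖ - d k) ^ 2
          + ∑ j ∈ T,
              (Metric.infDist x {y : (EuclideanSpace ℝ (Fin n)) | ∃ t : ℝ, y = a j + t • u j}) ^ 2} with hA_def
  set B := {c : ℝ | ∃ (θ : Fin m → (EuclideanSpace ℝ (Fin n))) (t : Fin m → ℝ),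
          (∀ k ∈ R, ‖θ k‖ = 1) ∧
          c = ∑ k,
            ‖(if k ∈ R then a k + d k • θ k else a k + t k • u k)
              - (m : ℝ)⁻¹ •
                  ∑ l, (if l ∈ R then a l + d l • θ l else a l + t l • u l)‖ ^ 2} with hB_def
  have hAbdd : ∀ c ∈ A, (0:ℝ) ≤ c := by
    rintro c ⟨x, rfl⟩
    have h1 : (0:ℝ) ≤ ∑ k ∈ R, (‖x - a k‖ - d k) ^ 2 :=
      Finset.sum_nonneg fun k _ => sq_nonneg _
    have h2 : (0:ℝ) ≤ ∑ j ∈ T,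
        (Metric.infDist x {y : (EuclideanSpace ℝ (Fin n)) | ∃ t : ℝ, y = a j + t • u j}) ^ 2 :=
      Finset.sum_nonneg fun j _ => sq_nonneg _
    linarith
  have hBbdd : ∀ c ∈ B, (0:ℝ) ≤ c := by
    rintro c ⟨θ, t, hθ, rfl⟩
    exact Finset.sum_nonneg fun k _ => sq_nonneg _
  have hAne : A.Nonempty := ⟨_, 0, rfl⟩
  have hBne : B.Nonempty := ⟨_, fun _ => e, fun _ => 0, fun k _ => he, rfl⟩
  -- split a sum over univ into R and T
  have hsplit : ∀ g : Fin m → ℝ, ∑ k, g k = ∑ k ∈ R, g k + ∑ k ∈ T, g k := by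
    intro g
    rw [← Finset.sum_union hdisj, hpart]
  apply le_antisymm
  · -- sInf A ≤ sInf B
    apply le_csInf hBne
    rintro c ⟨θ, t, hθ, rfl⟩
    set y : Fin m → (EuclideanSpace ℝ (Fin n)) := fun k => if k ∈ R then a k + d k • θ k else a k + t k • u k
      with hy_def
    set cb : (EuclideanSpace ℝ (Fin n)) := (m : ℝ)⁻¹ • ∑ l, y l with hcb_def
    refine csInf_le_of_le ⟨0, hAbdd⟩ ⟨cb, rfl⟩ ?_
    have hterm : ∀ k, (if k ∈ R then (‖cb - a k‖ - d k) ^ 2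
        else (Metric.infDist cb {z : (EuclideanSpace ℝ (Fin n)) | ∃ s : ℝ, z = a k + s • u k}) ^ 2)
        ≤ ‖y k - cb‖ ^ 2 := by
      intro k
      by_cases hk : k ∈ R
      · simp only [hk, if_pos, hy_def]
        rw [norm_sub_rev (a k + d k • θ k) cb]
        exact sphere_le cb (a k) (hd k hk) (hθ k hk)
      · simp only [hk, if_neg, hy_def, if_false]
        rw [norm_sub_rev (a k + t k • u k) cb]
        have hmem : a k + t k • u k ∈ {z : (EuclideanSpace ℝ (Fin n)) | ∃ s : ℝ, z = a k + s • u k} :=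
          ⟨t k, rfl⟩
        have h1 := Metric.infDist_le_dist_of_mem (x := cb) hmem
        rw [dist_eq_norm] at h1
        exact pow_le_pow_left₀ Metric.infDist_nonneg h1 2
    calc ∑ k ∈ R, (‖cb - a k‖ - d k) ^ 2
          + ∑ j ∈ T, (Metric.infDist cb {z : (EuclideanSpace ℝ (Fin n)) | ∃ s : ℝ, z = a j + s • u j}) ^ 2
        = ∑ k, (if k ∈ R then (‖cb - a k‖ - d k) ^ 2
            else (Metric.infDist cb {z : (EuclideanSpace ℝ (Fin n)) | ∃ s : ℝ, z = a k + s • u k}) ^ 2) := by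
          rw [hsplit]
          congr 1
          · exact Finset.sum_congr rfl fun k hk => by rw [if_pos hk]
          · exact Finset.sum_congr rfl fun k hk => by
              rw [if_neg (Finset.disjoint_right.mp hdisj hk)]
      _ ≤ ∑ k, ‖y k - cb‖ ^ 2 := Finset.sum_le_sum fun k _ => hterm k
  · -- sInf B ≤ sInf A
    apply le_csInf hAne
    rintro c ⟨x, rfl⟩
    have hθex : ∀ k : Fin m, ∃ θ : (EuclideanSpace ℝ (Fin n)), ‖θ‖ = 1 ∧
        (k ∈ R → ‖x - (a k + d k • θ)‖ = |‖x - a k‖ - d k|) := by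
      intro k
      by_cases hk : k ∈ R
      · obtain ⟨θ, h1, h2⟩ := sphere_exact x (a k) (hd k hk) he
        exact ⟨θ, h1, fun _ => h2⟩
      · exact ⟨e, he, fun h => absurd h hk⟩
    choose θ hθ1 hθ2 using hθex
    set t : Fin m → ℝ := fun k => ⟪x - a k, u k⟫ with ht_def
    set y : Fin m → (EuclideanSpace ℝ (Fin n)) := fun k => if k ∈ R then a k + d k • θ k else a k + t k • u k
      with hy_def
    refine csInf_le_of_le ⟨0, hBbdd⟩ ⟨θ, t, fun k _ => hθ1 k, rfl⟩ ?_
    have hvar := variance (E := (EuclideanSpace ℝ (Fin n))) hm y x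
    have hval : ∑ k, ‖x - y k‖ ^ 2
        = ∑ k ∈ R, (‖x - a k‖ - d k) ^ 2
          + ∑ j ∈ T, (Metric.infDist x {z : (EuclideanSpace ℝ (Fin n)) | ∃ s : ℝ, z = a j + s • u j}) ^ 2 := by
      rw [hsplit]
      congr 1
      · refine Finset.sum_congr rfl fun k hk => ?_
        rw [hy_def]
        simp only [if_pos hk]
        rw [hθ2 k hk, sq_abs]
      · refine Finset.sum_congr rfl fun k hk => ?_
        rw [hy_def]
        simp only [if_neg (Finset.disjoint_right.mp hdisj hk)]
        rw [line_exact x (a k) (u k) (hu k hk)]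
    exact hvar.trans hval.le
end
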